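/- Ranked Pairs violates independence of Pareto-dominated alternatives, even on uniquely weighted profiles: there exists a uniquely weighted preference profile P and alternatives a, b ∈ A(P) such that b Pareto-dominates a and RP(P) ≠ RP(P_{−a}). -/

import Mathlib

/-! ## Preference profiles -/

/-- A preference profile: a finite set of voters, a finite set of alternatives,
and for each voter a (Boolean-valued) preference relation, `pref i x y` meaning
voter `i` ranks `x` above `y`. -/
structure Profile (ν α : Type) where
  voters : Finset ν
  alts : Finset α
  pref : ν → α → α → Bool

namespace Profile

variable {ν α : Type}

/-- A profile is valid if there is at least one voter, at least two alternatives,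
and every voter's preference is a strict linear order on the alternatives. -/
def Valid (P : Profile ν α) : Prop :=
  P.voters.Nonempty ∧ 2 ≤ P.alts.card ∧
  (∀ i ∈ P.voters, ∀ a ∈ P.alts, ¬ P.pref i a a) ∧
  (∀ i ∈ P.voters, ∀ a ∈ P.alts, ∀ b ∈ P.alts, ∀ c ∈ P.alts,
      P.pref i a b → P.pref i b c → P.pref i a c) ∧
  (∀ i ∈ P.voters, ∀ a ∈ P.alts, ∀ b ∈ P.alts, a ≠ b → (P.pref i a b ↔ ¬ P.pref i b a))

/-- The majority margin of `x` over `y`. -/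
def margin (P : Profile ν α) (x y : α) : ℤ :=
  ((P.voters.filter (fun i => P.pref i x y)).card : ℤ) -
    ((P.voters.filter (fun i => P.pref i y x)).card : ℤ)

/-- The restriction of a profile to the alternatives other than `x`. -/
def restrict [DecidableEq α] (P : Profile ν α) (x : α) : Profile ν α :=
  ⟨P.voters, P.alts.erase x, P.pref⟩

/-- `y` Pareto-dominates `x`: every voter ranks `y` above `x`,
i.e. the margin of `y` over `x` equals the number of voters. -/
def ParetoDominates (P : Profile ν α) (y x : α) : Prop :=
  P.margin y x = P.voters.card

/-- A profile is uniquely weighted if no margin between distinct alternatives is zero and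
distinct ordered pairs of distinct alternatives have distinct margins. -/
def UniquelyWeighted (P : Profile ν α) : Prop :=
  (∀ x ∈ P.alts, ∀ y ∈ P.alts, x ≠ y → P.margin x y ≠ 0) ∧
  (∀ x ∈ P.alts, ∀ y ∈ P.alts, ∀ v ∈ P.alts, ∀ w ∈ P.alts,
      x ≠ y → v ≠ w → (x, y) ≠ (v, w) → P.margin x y ≠ P.margin v w)

end Profile

/-! ## Lists, precedence, tiebreakers -/

/-- `e` precedes `f` in the list `L`. -/
def Precedes {β : Type} (L : List β) (e f : β) : Prop :=
  ∃ l₁ l₂ l₃ : List β, L = l₁ ++ e :: (l₂ ++ f :: l₃)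

/-- A tiebreaker for a profile `P`: a linear order (list) of all ordered pairs of distinct
alternatives with nonnegative margin, in which pairs with strictly larger margin come first. -/
def IsTiebreaker {ν α : Type} (P : Profile ν α) (L : List (α × α)) : Prop :=
  L.Nodup ∧
  (∀ e : α × α, e ∈ L ↔ e.1 ∈ P.alts ∧ e.2 ∈ P.alts ∧ e.1 ≠ e.2 ∧ 0 ≤ P.margin e.1 e.2) ∧
  L.Pairwise (fun e f => P.margin f.1 f.2 ≤ P.margin e.1 e.2)

/-! ## The River method -/

open Classical in
/-- The River diagram: process the edges in the order given by `L`, adding an edge unless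
it would create a directed cycle or a second incoming edge at its target. -/
noncomputable def riverDiagram {α : Type} (L : List (α × α)) : Finset (α × α) :=
  L.foldl (fun E e =>
    if (∃ f ∈ E, f.2 = e.2) ∨ Relation.ReflTransGen (fun a b => (a, b) ∈ E) e.2 e.1
    then E else insert e E) ∅

open Classical in
/-- The River winners: the sources (vertices with no incoming edge) of the River diagram. -/
noncomputable def riverWinners {ν α : Type} (P : Profile ν α) (L : List (α × α)) : Finset α :=
  P.alts.filter (fun x => ∀ f ∈ riverDiagram L, f.2 ≠ x)

/-! ## Split Cycle -/

/-- The (cyclically) consecutive edges of a cycle given by a list of distinct vertices. -/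
def cycleEdges {α : Type} (c : List α) : List (α × α) := c.zip (c.rotate 1)

/-- A majority cycle: a cycle of distinct alternatives all of whose edges have positive margin. -/
def IsMajorityCycle {ν α : Type} (P : Profile ν α) (c : List α) : Prop :=
  c.Nodup ∧ (∀ a ∈ c, a ∈ P.alts) ∧ ∀ e ∈ cycleEdges c, 0 < P.margin e.1 e.2

/-- `e` is a splitting edge of some majority cycle: it attains the minimum margin on the cycle. -/
def IsSplittingEdge {ν α : Type} (P : Profile ν α) (e : α × α) : Prop :=
  ∃ c : List α, IsMajorityCycle P c ∧ e ∈ cycleEdges c ∧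
    ∀ f ∈ cycleEdges c, P.margin e.1 e.2 ≤ P.margin f.1 f.2

open Classical in
/-- The Split Cycle winners: alternatives with no incoming edge in the Split Cycle diagram,
whose edges are the positive-margin pairs that are not splitting edges of any majority cycle. -/
noncomputable def splitCycleWinners {ν α : Type} (P : Profile ν α) : Finset α :=
  P.alts.filter (fun x => ¬ ∃ y ∈ P.alts, 0 < P.margin y x ∧ ¬ IsSplittingEdge P (y, x))

/-! ## Ranked Pairs -/

/-- A processing order for Ranked Pairs: all pairs with positive margin,
ordered by decreasing margin. -/
def IsRPOrder {ν α : Type} (P : Profile ν α) (L : List (α × α)) : Prop :=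
  L.Nodup ∧
  (∀ e : α × α, e ∈ L ↔ e.1 ∈ P.alts ∧ e.2 ∈ P.alts ∧ 0 < P.margin e.1 e.2) ∧
  L.Pairwise (fun e f => P.margin f.1 f.2 ≤ P.margin e.1 e.2)

open Classical in
/-- The Ranked Pairs diagram: add each edge in order unless it would create a directed cycle. -/
noncomputable def rpDiagram {α : Type} (L : List (α × α)) : Finset (α × α) :=
  L.foldl (fun E e =>
    if Relation.ReflTransGen (fun a b => (a, b) ∈ E) e.2 e.1 then E else insert e E) ∅

open Classical in
/-- The Ranked Pairs winners: sources of the Ranked Pairs diagram. -/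
noncomputable def rpWinners {ν α : Type} (P : Profile ν α) (L : List (α × α)) : Finset α :=
  P.alts.filter (fun x => ∀ f ∈ rpDiagram L, f.2 ≠ x)

/-! ## Beat Path -/

/-- A majority path: a sequence of distinct alternatives with positive margins along it. -/
def IsMajorityPath {ν α : Type} (P : Profile ν α) (p : List α) : Prop :=
  p.Nodup ∧ (∀ a ∈ p, a ∈ P.alts) ∧ p.Chain' (fun a b => 0 < P.margin a b)

/-- `s_P(x,y)`: the maximum strength (minimum margin along the path) of a majority path
from `x` to `y`, and `0` if there is no such path. -/
noncomputable def beatPathStrength {ν α : Type} (P : Profile ν α) (x y : α) : ℤ :=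
  sSup ({0} ∪ {s : ℤ | ∃ p : List α, IsMajorityPath P p ∧ p.head? = some x ∧
    p.getLast? = some y ∧ ((p.zip p.tail).map (fun e => P.margin e.1 e.2)).min? = some s})

open Classical in
/-- The Beat Path winners. -/
noncomputable def beatPathWinners {ν α : Type} (P : Profile ν α) : Finset α :=
  P.alts.filter (fun x => ∀ y ∈ P.alts, y ≠ x →
    beatPathStrength P y x ≤ beatPathStrength P x y)

/-! ## Stable Voting -/

/-- Auxiliary, fuel-based definition of Stable Voting (for uniquely weighted profiles).
If only one alternative remains it wins; otherwise the winner is the alternative `x` of the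
first pair `(x,y)` (ordered by decreasing margin) with `m(x,y) > 0` and `x` a Split Cycle
winner, such that `x` is a Stable Voting winner of the profile without `y`. -/
noncomputable def svAux {ν α : Type} [DecidableEq α] : ℕ → Profile ν α → Set α
  | 0, P => ↑P.alts
  | (n+1), P =>
      if P.alts.card ≤ 1 then ↑P.alts
      else {x | x ∈ P.alts ∧ ∃ y ∈ P.alts, 0 < P.margin x y ∧ x ∈ splitCycleWinners P ∧
        x ∈ svAux n (P.restrict y) ∧
        ∀ x' ∈ P.alts, ∀ y' ∈ P.alts, 0 < P.margin x' y' → x' ∈ splitCycleWinners P →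
          P.margin x y < P.margin x' y' → x' ∉ svAux n (P.restrict y')}

/-- The Stable Voting winners (for uniquely weighted profiles). -/
noncomputable def svWinners {ν α : Type} [DecidableEq α] (P : Profile ν α) : Set α :=
  svAux P.alts.card P

/-! ## Smith set, covering, quasi-Pareto domination -/

/-- A dominant set of alternatives: nonempty, and each member defeats every non-member. -/
def IsDominant {ν α : Type} (P : Profile ν α) (X : Finset α) : Prop :=
  X.Nonempty ∧ X ⊆ P.alts ∧ ∀ x ∈ X, ∀ y ∈ P.alts, y ∉ X → 0 < P.margin x y

/-- The Smith set: the inclusion-minimal dominant set. -/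
def IsSmithSet {ν α : Type} (P : Profile ν α) (S : Finset α) : Prop :=
  IsDominant P S ∧ ∀ X : Finset α, IsDominant P X → S ⊆ X

/-- `y` covers `x`: `y` defeats `x` and does at least as well against every third alternative. -/
def Covers {ν α : Type} (P : Profile ν α) (y x : α) : Prop :=
  0 < P.margin y x ∧ ∀ z ∈ P.alts, z ≠ x → z ≠ y → P.margin x z ≤ P.margin y z

/-- `y` quasi-Pareto-dominates `x`. -/
def QuasiParetoDominates {ν α : Type} (P : Profile ν α) (y x : α) : Prop :=
  Covers P y x ∧ ∀ z ∈ P.alts, z ≠ x → z ≠ y →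
    P.margin z x ≤ P.margin y x ∧ P.margin x z ≤ P.margin y x

/-! ## Tiebreaker functions -/

/-- A consistent tiebreaker function: it assigns a tiebreaker to every profile, and the relative
order of two edges not involving `x` is unchanged when `x` is removed from the profile. -/
def IsConsistentTBF {ν α : Type} [DecidableEq α] (T : Profile ν α → List (α × α)) : Prop :=
  (∀ P : Profile ν α, IsTiebreaker P (T P)) ∧
  ∀ (P : Profile ν α) (x a b c d : α), x ∈ P.alts →
    x ≠ a → x ≠ b → x ≠ c → x ≠ d →
    (a, b) ∈ T P → (c, d) ∈ T P →
    (Precedes (T P) (a, b) (c, d) ↔ Precedes (T (P.restrict x)) (a, b) (c, d))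

/-- A Pareto-consistent tiebreaker function: consistent, and whenever `y` Pareto-dominates `x`,
the edge `(y,z)` precedes the edge `(x,z)` for every third alternative `z`. -/
def IsParetoConsistentTBF {ν α : Type} [DecidableEq α]
    (T : Profile ν α → List (α × α)) : Prop :=
  IsConsistentTBF T ∧
  ∀ (P : Profile ν α) (x y z : α), P.ParetoDominates y x →
    z ≠ x → z ≠ y → (y, z) ∈ T P → (x, z) ∈ T P → Precedes (T P) (y, z) (x, z)

/-- A quasi-Pareto-consistent tiebreaker function. -/
def IsQuasiParetoConsistentTBF {ν α : Type} [DecidableEq α]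
    (T : Profile ν α → List (α × α)) : Prop :=
  IsParetoConsistentTBF T ∧
  (∀ (P : Profile ν α) (x y y' : α),
      P.margin y x = P.margin y' x → QuasiParetoDominates P y x →
      ¬ QuasiParetoDominates P y' x →
      (y, x) ∈ T P → (y', x) ∈ T P → Precedes (T P) (y, x) (y', x)) ∧
  (∀ (P : Profile ν α) (x y z : α), QuasiParetoDominates P y x →
      ((x, z) ∈ T P → (y, z) ∈ T P → Precedes (T P) (y, z) (x, z)) ∧
      ((x, z) ∈ T P → (y, x) ∈ T P → Precedes (T P) (y, x) (x, z)))

/-- A tiebreaker for `P` induced by the fixed tie-breaking order `r` on pairs: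
edges are ordered by decreasing margin, ties in margin broken according to `r`. -/
def IsTiebreakerVia {ν α : Type} (r : α × α → α × α → Prop) (P : Profile ν α)
    (L : List (α × α)) : Prop :=
  IsTiebreaker P L ∧ ∀ e f : α × α, Precedes L e f →
    P.margin f.1 f.2 < P.margin e.1 e.2 ∨ (P.margin e.1 e.2 = P.margin f.1 f.2 ∧ r e f)


/-! ## Auxiliary material for the counterexample -/

/-- The 22 voters' rankings (alternatives `0 = a`, `1 = b`, `2 = c`, `3 = d`). -/
def exOrders : List (List ℕ) :=
  [[1,2,0,3],[3,1,2,0],[2,1,0,3],[3,2,1,0],[2,1,0,3],[3,2,1,0],[1,3,0,2],[2,1,3,0],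
   [1,0,3,2],[2,1,0,3],[1,0,3,2],[2,1,0,3],[1,0,3,2],[2,1,0,3],[1,0,3,2],[2,1,0,3],
   [1,0,3,2],[2,1,0,3],[3,2,1,0],[1,0,3,2],[3,2,1,0],[1,0,3,2]]

/-- The counterexample profile. -/
def exP : Profile ℕ ℕ :=
  ⟨Finset.range 22, {0,1,2,3},
   fun i x y => decide ((exOrders.getD i []).idxOf x < (exOrders.getD i []).idxOf y)⟩

/-- All the majority margins of `exP`. -/
lemma exm00 : exP.margin 0 0 = 0 := by decide
lemma exm01 : exP.margin 0 1 = -22 := by decide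
lemma exm02 : exP.margin 0 2 = -6 := by decide
lemma exm03 : exP.margin 0 3 = 8 := by decide
lemma exm10 : exP.margin 1 0 = 22 := by decide
lemma exm11 : exP.margin 1 1 = 0 := by decide
lemma exm12 : exP.margin 1 2 = -2 := by decide
lemma exm13 : exP.margin 1 3 = 12 := by decide
lemma exm20 : exP.margin 2 0 = 6 := by decide
lemma exm21 : exP.margin 2 1 = 2 := by decide
lemma exm22 : exP.margin 2 2 = 0 := by decide
lemma exm23 : exP.margin 2 3 = -4 := by decide
lemma exm30 : exP.margin 3 0 = -8 := by decide
lemma exm31 : exP.margin 3 1 = -12 := by decide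
lemma exm32 : exP.margin 3 2 = 4 := by decide
lemma exm33 : exP.margin 3 3 = 0 := by decide

/-- Restriction does not change margins. -/
lemma restrict_margin (x y z : ℕ) : (exP.restrict z).margin x y = exP.margin x y := rfl

/-- Reachability stays inside a set closed under the edge relation. -/
lemma reach_mem {E : Finset (ℕ × ℕ)} {S : ℕ → Prop}
    (hS : ∀ p ∈ E, S p.1 → S p.2) {x y : ℕ}
    (h : Relation.ReflTransGen (fun a b => (a, b) ∈ E) x y) (hx : S x) : S y := by
  induction h with
  | refl => exact hx
  | tail _ h2 ih => exact hS _ h2 ih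

/-- Two sorted lists, with the order antisymmetric on their elements, that are
permutations of each other are equal. -/
lemma perm_sorted_eq {β : Type} (r : β → β → Prop) :
    ∀ l₁ l₂ : List β, l₁.Perm l₂ →
    l₁.Pairwise r → l₂.Pairwise r →
    (∀ x ∈ l₁, ∀ y ∈ l₁, r x y → r y x → x = y) → l₁ = l₂ := by
  intro l₁
  induction l₁ with
  | nil =>
    intro l₂ hp _ _ _
    exact hp.nil_eq
  | cons a t ih =>
    intro l₂ hp hs₁ hs₂ hinj
    cases l₂ with
    | nil => exact absurd hp.symm.nil_eq (by simp)
    | cons b t' =>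
      have hab : a = b := by
        by_contra hne
        have ha2 : a ∈ b :: t' := hp.mem_iff.mp (by simp)
        have hb1 : b ∈ a :: t := hp.symm.mem_iff.mp (by simp)
        have ha2' : a ∈ t' := by
          rcases List.mem_cons.mp ha2 with h | h
          · exact absurd h hne
          · exact h
        have hb1' : b ∈ t := by
          rcases List.mem_cons.mp hb1 with h | h
          · exact absurd h.symm hne
          · exact h
        have h1 : r a b := (List.pairwise_cons.mp hs₁).1 b hb1'
        have h2 : r b a := (List.pairwise_cons.mp hs₂).1 a ha2'
        exact hne (hinj a (by simp) b (by simp [hb1']) h1 h2)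
      subst hab
      have ht := ih t' hp.cons_inv (List.pairwise_cons.mp hs₁).2 (List.pairwise_cons.mp hs₂).2
        (fun x hx y hy h h' => hinj x (by simp [hx]) y (by simp [hy]) h h')
      rw [ht]

/-- The unique RP processing order for `exP`. -/
lemma isRPOrder_eq (L : List (ℕ × ℕ)) (h : IsRPOrder exP L) :
    L = [(1,0),(1,3),(0,3),(2,0),(3,2),(2,1)] := by
  obtain ⟨hnd, hmem, hsort⟩ := h
  have hmem0 : ∀ e : ℕ × ℕ, e ∈ L ↔ e ∈ [((1:ℕ),(0:ℕ)),(1,3),(0,3),(2,0),(3,2),(2,1)] := by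
    intro e
    rw [hmem]
    constructor
    · rintro ⟨h1, h2, h3⟩
      obtain ⟨x, y⟩ := e
      simp only [exP, Finset.mem_insert, Finset.mem_singleton] at h1 h2
      rcases h1 with rfl | rfl | rfl | rfl <;> rcases h2 with rfl | rfl | rfl | rfl <;>
        simp only [exm00, exm01, exm02, exm03, exm10, exm11, exm12, exm13,
          exm20, exm21, exm22, exm23, exm30, exm31, exm32, exm33] at h3 <;>
        first
          | exact absurd h3 (by omega)
          | decide
    · intro he
      obtain ⟨x, y⟩ := e
      simp only [List.mem_cons, List.not_mem_nil, or_false, Prod.mk.injEq] at he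
      rcases he with ⟨rfl, rfl⟩ | ⟨rfl, rfl⟩ | ⟨rfl, rfl⟩ | ⟨rfl, rfl⟩ | ⟨rfl, rfl⟩ | ⟨rfl, rfl⟩ <;>
        refine ⟨by decide, by decide, ?_⟩ <;>
        simp only [exm10, exm13, exm03, exm20, exm32, exm21] <;> omega
  have hperm : L.Perm [((1:ℕ),(0:ℕ)),(1,3),(0,3),(2,0),(3,2),(2,1)] :=
    (List.perm_ext_iff_of_nodup hnd (by decide)).mpr hmem0
  refine perm_sorted_eq _ L _ hperm hsort ?_ ?_
  · simp only [List.pairwise_cons, List.mem_cons, List.not_mem_nil, or_false]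
    refine ⟨?_, ?_, ?_, ?_, ?_, fun b hb => hb.elim, List.Pairwise.nil⟩ <;>
      intro b hb <;>
      rcases hb with rfl | rfl | rfl | rfl | rfl | rfl <;>
      simp only [exm10, exm13, exm03, exm20, exm32, exm21] <;> omega
  · intro x hx y hy hk hk'
    have hx' := (hmem0 x).mp hx
    have hy' := (hmem0 y).mp hy
    simp only [List.mem_cons, List.not_mem_nil, or_false] at hx' hy'
    rcases hx' with rfl | rfl | rfl | rfl | rfl | rfl <;>
      rcases hy' with rfl | rfl | rfl | rfl | rfl | rfl <;>
      simp only [exm10, exm13, exm03, exm20, exm32, exm21] at hk hk' <;>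
      first
        | rfl
        | omega
/-- The unique RP processing order for `exP` restricted away from `0`. -/
lemma isRPOrder_eq' (L : List (ℕ × ℕ)) (h : IsRPOrder (exP.restrict 0) L) :
    L = [(1,3),(3,2),(2,1)] := by
  obtain ⟨hnd, hmem, hsort⟩ := h
  have hmem0 : ∀ e : ℕ × ℕ, e ∈ L ↔ e ∈ [((1:ℕ),(3:ℕ)),(3,2),(2,1)] := by
    intro e
    rw [hmem]
    constructor
    · rintro ⟨h1, h2, h3⟩
      obtain ⟨x, y⟩ := e
      rw [restrict_margin] at h3
      simp only [Profile.restrict, exP, Finset.mem_erase, Finset.mem_insert,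
        Finset.mem_singleton] at h1 h2
      obtain ⟨hx0, h1⟩ := h1
      obtain ⟨hy0, h2⟩ := h2
      rcases h1 with rfl | rfl | rfl | rfl <;> rcases h2 with rfl | rfl | rfl | rfl <;>
        first
          | exact absurd rfl hx0
          | exact absurd rfl hy0
          | (simp only [exm11, exm12, exm13, exm21, exm22, exm23,
              exm31, exm32, exm33] at h3;
             first
               | exact absurd h3 (by omega)
               | decide)
    · intro he
      obtain ⟨x, y⟩ := e
      simp only [List.mem_cons, List.not_mem_nil, or_false, Prod.mk.injEq] at he
      rcases he with ⟨rfl, rfl⟩ | ⟨rfl, rfl⟩ | ⟨rfl, rfl⟩ <;>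
        refine ⟨by decide, by decide, ?_⟩ <;>
        rw [restrict_margin] <;>
        simp only [exm13, exm32, exm21] <;> omega
  have hperm : L.Perm [((1:ℕ),(3:ℕ)),(3,2),(2,1)] :=
    (List.perm_ext_iff_of_nodup hnd (by decide)).mpr hmem0
  refine perm_sorted_eq _ L _ hperm hsort ?_ ?_
  · simp only [List.pairwise_cons, List.mem_cons, List.not_mem_nil, or_false]
    refine ⟨?_, ?_, fun b hb => hb.elim, List.Pairwise.nil⟩ <;>
      intro b hb <;>
      rcases hb with rfl | rfl | rfl <;>
      simp only [restrict_margin, exm13, exm32, exm21] <;> omega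
  · intro x hx y hy hk hk'
    have hx' := (hmem0 x).mp hx
    have hy' := (hmem0 y).mp hy
    simp only [List.mem_cons, List.not_mem_nil, or_false] at hx' hy'
    rcases hx' with rfl | rfl | rfl <;> rcases hy' with rfl | rfl | rfl <;>
      simp only [restrict_margin, exm13, exm32, exm21] at hk hk' <;>
      first
        | rfl
        | omega

set_option linter.unusedTactic false in
/-- The RP diagram of the full profile's processing order. -/
lemma rpDiagram_full :
    rpDiagram [((1:ℕ),(0:ℕ)),(1,3),(0,3),(2,0),(3,2),(2,1)] =
      insert ((2:ℕ),(1:ℕ)) (insert (2,0) (insert (0,3) (insert (1,3) (insert (1,0) ∅)))) := by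
  unfold rpDiagram
  rw [List.foldl_cons]; beta_reduce
  split
  · next h =>
    exact absurd (reach_mem (S := fun n => n = 0)
      (by intro p hp; exact absurd hp (Finset.notMem_empty p)) h rfl) (by omega)
  · rw [List.foldl_cons]; beta_reduce
    split
    · next h =>
      exact absurd (reach_mem (S := fun n => n = 3)
        (by intro p hp
            simp only [Finset.mem_insert, Finset.notMem_empty, or_false] at hp
            subst hp; intro hh; exact absurd hh (by simp)) h rfl) (by omega)
    · rw [List.foldl_cons]; beta_reduce
      split
      · next h =>
        exact absurd (reach_mem (S := fun n => n = 3)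
          (by intro p hp
              simp only [Finset.mem_insert, Finset.notMem_empty, or_false] at hp
              rcases hp with rfl | rfl <;> intro hh <;> exact absurd hh (by simp))
          h rfl) (by omega)
      · rw [List.foldl_cons]; beta_reduce
        split
        · next h =>
          exact absurd (reach_mem (S := fun n => n = 0 ∨ n = 3)
            (by intro p hp
                simp only [Finset.mem_insert, Finset.notMem_empty, or_false] at hp
                rcases hp with rfl | rfl | rfl <;> intro hh <;> simp at hh ⊢)
            h (Or.inl rfl)) (by simp)
        · rw [List.foldl_cons]; beta_reduce
          split
          · rw [List.foldl_cons]; beta_reduce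
            split
            · next h =>
              exact absurd (reach_mem (S := fun n => n ≠ 2)
                (by intro p hp
                    simp only [Finset.mem_insert, Finset.notMem_empty, or_false] at hp
                    rcases hp with rfl | rfl | rfl | rfl <;> intro hh <;> simp_all)
                h (by simp)) (by simp)
            · rw [List.foldl_nil]
              ext p
              simp [Finset.mem_insert]
          · next h5 =>
            exfalso
            apply h5
            refine Relation.ReflTransGen.head (b := 0) ?_
              (Relation.ReflTransGen.single ?_) <;> simp

set_option linter.unusedTactic false in
/-- The RP diagram of the restricted profile's processing order. -/
lemma rpDiagram_restr :
    rpDiagram [((1:ℕ),(3:ℕ)),(3,2),(2,1)] =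
      insert ((3:ℕ),(2:ℕ)) (insert (1,3) ∅) := by
  unfold rpDiagram
  rw [List.foldl_cons]; beta_reduce
  split
  · next h =>
    exact absurd (reach_mem (S := fun n => n = 3)
      (by intro p hp; exact absurd hp (Finset.notMem_empty p)) h rfl) (by omega)
  · rw [List.foldl_cons]; beta_reduce
    split
    · next h =>
      exact absurd (reach_mem (S := fun n => n = 2)
        (by intro p hp
            simp only [Finset.mem_insert, Finset.notMem_empty, or_false] at hp
            subst hp; intro hh; exact absurd hh (by simp)) h rfl) (by omega)
    · rw [List.foldl_cons]; beta_reduce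
      split
      · rw [List.foldl_nil]
        ext p
        simp [Finset.mem_insert]
      · next h3 =>
        exfalso
        apply h3
        refine Relation.ReflTransGen.head (b := 3) ?_
          (Relation.ReflTransGen.single ?_) <;> simp

/-! ## STATEMENT 4: Ranked Pairs violates IPDA, even on uniquely weighted profiles -/

theorem rankedPairs_violates_IPDA : ∃ (P : Profile ℕ ℕ) (a b : ℕ),
    P.Valid ∧ P.UniquelyWeighted ∧ a ∈ P.alts ∧ b ∈ P.alts ∧
    P.ParetoDominates b a ∧
    ∀ L L' : List (ℕ × ℕ), IsRPOrder P L → IsRPOrder (P.restrict a) L' →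
      rpWinners P L ≠ rpWinners (P.restrict a) L' := by
  refine ⟨exP, 0, 1, ?_, ?_, by decide, by decide, ?_, ?_⟩
  · unfold Profile.Valid; decide
  · constructor
    · intro x hx y hy hxy
      simp only [exP, Finset.mem_insert, Finset.mem_singleton] at hx hy
      rcases hx with rfl | rfl | rfl | rfl <;> rcases hy with rfl | rfl | rfl | rfl <;>
        first
          | exact absurd rfl hxy
          | (simp only [exm01, exm02, exm03, exm10, exm12, exm13,
              exm20, exm21, exm23, exm30, exm31, exm32]; omega)
    · intro x hx y hy v hv w hw hxy hvw hne
      simp only [exP, Finset.mem_insert, Finset.mem_singleton] at hx hy hv hw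
      rcases hx with rfl | rfl | rfl | rfl <;> rcases hy with rfl | rfl | rfl | rfl <;>
        rcases hv with rfl | rfl | rfl | rfl <;> rcases hw with rfl | rfl | rfl | rfl <;>
        first
          | exact absurd rfl hxy
          | exact absurd rfl hvw
          | exact absurd rfl hne
          | (simp only [exm01, exm02, exm03, exm10, exm12, exm13,
              exm20, exm21, exm23, exm30, exm31, exm32]; omega)
  · show exP.margin 1 0 = (exP.voters.card : ℤ)
    rw [exm10]; decide
  · intro L L' hL hL'
    rw [isRPOrder_eq L hL, isRPOrder_eq' L' hL']
    intro heq
    have h2in : 2 ∈ rpWinners exP [(1,0),(1,3),(0,3),(2,0),(3,2),(2,1)] := by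
      simp only [rpWinners, Finset.mem_filter]
      refine ⟨by decide, ?_⟩
      rw [rpDiagram_full]
      intro f hf
      fin_cases hf <;> decide
    have h2out : (2:ℕ) ∉ rpWinners (exP.restrict 0) [(1,3),(3,2),(2,1)] := by
      intro hmem
      simp only [rpWinners, Finset.mem_filter] at hmem
      exact hmem.2 (3,2) (by rw [rpDiagram_restr]; decide) rfl
    rw [heq] at h2in
    exact h2out h2in
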